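/- Let n ≥ 1, let X ⊂ ℝⁿ be a finite point cloud, V a box in ℝⁿ, π > 0, 0 < α ≤ 1, γ = (1/α) − 1, N = X ∩ B(V, π), and let M be a largest optimal solution in sol_α(V, N) with M ≠ V. Let p be the number of facets of M that are disjoint from V and q the number of facets of M contained in the open box B(V, π), and assume p ≥ 1 and q ≥ 1. Let θ(N∖M) = #(N ∖ M) and θ(∂M) = #(N ∩ ∂M), where ∂M is the topological boundary of M. Then (θ(N∖M) + θ(∂M))/p ≥ γ ≥ θ(N∖M)/q. -/

import Mathlib

open scoped Classical

noncomputable section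

namespace BoxFiltration

variable {n : ℕ}

/-- `(l, u)` determines a box `∏ i, [l i, u i]` when `l i ≤ u i` for all `i`. -/
def IsBox (l u : Fin n → ℝ) : Prop := ∀ i, l i ≤ u i

/-- The set of points of the box `∏ i, [l i, u i]`. -/
def boxSet (l u : Fin n → ℝ) : Set (Fin n → ℝ) := {x | ∀ i, l i ≤ x i ∧ x i ≤ u i}

/-- Total width `|V| = ∑ i, (u i - l i)`. -/
def width (l u : Fin n → ℝ) : ℝ := ∑ i, (u i - l i)

/-- Box containment: the box `(l, u)` is contained in the box `(L, U)`. -/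
def BoxLE (l u L U : Fin n → ℝ) : Prop := ∀ i, L i ≤ l i ∧ u i ≤ U i

/-- Open π-neighborhood `B(V, π) = ∏ i, (l i - π, u i + π)`. -/
def nbhd (l u : Fin n → ℝ) (π : ℝ) : Set (Fin n → ℝ) :=
  {x | ∀ i, l i - π < x i ∧ x i < u i + π}

/-- Weight of a point `x` w.r.t. the box `(l, u)`:
`w_V(x) = min {0, min_i (x i - l i), min_i (u i - x i)}`. -/
def weight (l u x : Fin n → ℝ) : ℝ :=
  min 0 (sInf (Set.range fun i => min (x i - l i) (u i - x i)))

/-- Point-cover cost `C_α(V, N) = -α ∑_{x ∈ N} w_V(x) + (1 - α)|V|`. -/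
def cost (α : ℝ) (l u : Fin n → ℝ) (N : Finset (Fin n → ℝ)) : ℝ :=
  -α * ∑ x ∈ N, weight l u x + (1 - α) * width l u

/-- Neighborhood point set `N = X ∩ B(V, π)`. -/
def nbhdPts (X : Finset (Fin n → ℝ)) (l u : Fin n → ℝ) (π : ℝ) : Finset (Fin n → ℝ) :=
  X.filter (fun x => x ∈ nbhd l u π)

/-- `(l', u') ∈ sol_α(V, N)`: `(l', u')` is a box containing `V = (l, u)` of minimal cost. -/
def OptSol (α : ℝ) (l u : Fin n → ℝ) (N : Finset (Fin n → ℝ)) (l' u' : Fin n → ℝ) : Prop :=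
  IsBox l' u' ∧ BoxLE l u l' u' ∧
    ∀ l'' u'', IsBox l'' u'' → BoxLE l u l'' u'' → cost α l' u' N ≤ cost α l'' u'' N

/-- A largest optimal solution contains every optimal solution. -/
def LargestOptSol (α : ℝ) (l u : Fin n → ℝ) (N : Finset (Fin n → ℝ)) (l' u' : Fin n → ℝ) :
    Prop :=
  OptSol α l u N l' u' ∧ ∀ l'' u'', OptSol α l u N l'' u'' → BoxLE l'' u'' l' u'

end BoxFiltration


namespace BoxFiltration

variable {n : ℕ}

/-- The facet of the box `(l, u)` in direction `i`: the upper facet if `b = true`,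
the lower facet if `b = false`. -/
def facet (l u : Fin n → ℝ) (i : Fin n) (b : Bool) : Set (Fin n → ℝ) :=
  {x | x ∈ boxSet l u ∧ x i = if b then u i else l i}

end BoxFiltration

open BoxFiltration

namespace BoxAux

open BoxFiltration

variable {n : ℕ}

lemma min_inf' {ι : Type*} (s : Finset ι) (hs : s.Nonempty) (f : ι → ℝ) (c : ℝ) :
    min c (s.inf' hs f) = s.inf' hs (fun i => min c (f i)) := by
  apply le_antisymm
  · exact Finset.le_inf' _ _ (fun i hi => min_le_min le_rfl (Finset.inf'_le _ hi))
  · obtain ⟨j, hj, hj2⟩ := Finset.exists_mem_eq_inf' hs f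
    rcases le_total c (s.inf' hs f) with h | h
    · calc s.inf' hs (fun i => min c (f i)) ≤ min c (f j) := Finset.inf'_le _ hj
        _ ≤ c := min_le_left _ _
        _ = min c (s.inf' hs f) := (min_eq_left h).symm
    · calc s.inf' hs (fun i => min c (f i)) ≤ min c (f j) := Finset.inf'_le _ hj
        _ ≤ f j := min_le_right _ _
        _ = s.inf' hs f := hj2.symm
        _ = min c (s.inf' hs f) := (min_eq_right h).symm

lemma inf'_add_const {ι : Type*} (s : Finset ι) (hs : s.Nonempty) (f : ι → ℝ) (c : ℝ) :
    s.inf' hs (fun i => f i + c) = s.inf' hs f + c := by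
  apply le_antisymm
  · obtain ⟨j, hj, hj2⟩ := Finset.exists_mem_eq_inf' hs f
    calc s.inf' hs (fun i => f i + c) ≤ f j + c := Finset.inf'_le _ hj
      _ = s.inf' hs f + c := by rw [hj2]
  · exact Finset.le_inf' _ _ (fun i hi => add_le_add_left (Finset.inf'_le _ hi) c)

/-- margin of `x` in the box `(l,u)` in direction `i`. -/
def mrg (l u x : Fin n → ℝ) (i : Fin n) : ℝ := min (x i - l i) (u i - x i)

lemma weight_eq_min (hne : (Finset.univ : Finset (Fin n)).Nonempty) (l u x : Fin n → ℝ) :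
    weight l u x = min 0 (Finset.univ.inf' hne (mrg l u x)) := by
  unfold weight
  congr 1
  rw [Finset.inf'_eq_csInf_image, Finset.coe_univ, Set.image_univ]
  rfl

lemma weight_eq_inf' (hne : (Finset.univ : Finset (Fin n)).Nonempty) (l u x : Fin n → ℝ) :
    weight l u x = Finset.univ.inf' hne (fun i => min 0 (mrg l u x i)) := by
  rw [weight_eq_min hne, min_inf']

lemma mem_boxSet_iff (hne : (Finset.univ : Finset (Fin n)).Nonempty) (l u x : Fin n → ℝ) :
    x ∈ boxSet l u ↔ 0 ≤ Finset.univ.inf' hne (mrg l u x) := by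
  rw [Finset.le_inf'_iff]
  constructor
  · intro h i _
    exact le_min (by linarith [(h i).1]) (by linarith [(h i).2])
  · intro h i
    have := h i (Finset.mem_univ i)
    constructor
    · linarith [le_trans this (min_le_left _ _)]
    · linarith [le_trans this (min_le_right _ _)]

lemma weight_mono (hne : (Finset.univ : Finset (Fin n)).Nonempty)
    {a b c d : Fin n → ℝ} (h : BoxLE a b c d) (x : Fin n → ℝ) :
    weight a b x ≤ weight c d x := by
  rw [weight_eq_min hne, weight_eq_min hne]
  refine min_le_min le_rfl (Finset.le_inf' _ _ (fun i _ => ?_))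
  calc Finset.univ.inf' hne (mrg a b x) ≤ mrg a b x i := Finset.inf'_le _ (Finset.mem_univ i)
    _ ≤ mrg c d x i := min_le_min (by linarith [(h i).1]) (by linarith [(h i).2])

lemma boxSet_eq_Icc (l u : Fin n → ℝ) : boxSet l u = Set.Icc l u := by
  ext x
  simp only [boxSet, Set.mem_setOf_eq, Set.mem_Icc, Pi.le_def, forall_and]

lemma interior_pos (hne : (Finset.univ : Finset (Fin n)).Nonempty) (l u x : Fin n → ℝ)
    (hx : x ∈ boxSet l u) (hfr : x ∉ frontier (boxSet l u)) :
    0 < Finset.univ.inf' hne (mrg l u x) := by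
  have hclosed : IsClosed (boxSet l u) := by rw [boxSet_eq_Icc]; exact isClosed_Icc
  have hint : x ∈ interior (boxSet l u) := by
    by_contra h
    exact hfr ⟨subset_closure hx, h⟩
  rw [boxSet_eq_Icc, ← Set.pi_univ_Icc, interior_pi_set Set.finite_univ] at hint
  rw [Finset.lt_inf'_iff]
  intro i _
  have := hint i (Set.mem_univ i)
  simp only [Function.comp, interior_Icc, Set.mem_Ioo] at this
  exact lt_min (by linarith [this.1]) (by linarith [this.2])

end BoxAux


/-- point-count bounds for a largest optimal solution `M ≠ V` of
`sol_α(V, N)`, `N = X ∩ B(V, π)`: with `γ = 1/α - 1`, `p` the number of facets of `M`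
disjoint from `V`, and `q` the number of facets of `M` contained in the open box
`B(V, π)`, one has `(θ(N∖M) + θ(∂M))/p ≥ γ ≥ θ(N∖M)/q`. -/
theorem point_count_bounds_largestOptSol
    (n : ℕ) (hn : 1 ≤ n) (X : Finset (Fin n → ℝ)) (π : ℝ) (hπ : 0 < π)
    (α : ℝ) (hα0 : 0 < α) (hα1 : α ≤ 1) (γ : ℝ) (hγ : γ = 1 / α - 1)
    (l u : Fin n → ℝ) (hV : IsBox l u)
    (Ml Mu : Fin n → ℝ) (hM : LargestOptSol α l u (nbhdPts X l u π) Ml Mu)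
    (hMV : boxSet Ml Mu ≠ boxSet l u)
    (p q : ℕ)
    (hp : p = (Finset.univ.filter (fun ib : Fin n × Bool =>
        Disjoint (facet Ml Mu ib.1 ib.2) (boxSet l u))).card)
    (hq : q = (Finset.univ.filter (fun ib : Fin n × Bool =>
        facet Ml Mu ib.1 ib.2 ⊆ nbhd l u π)).card)
    (hp1 : 1 ≤ p) (hq1 : 1 ≤ q)
    (θc θb : ℕ)
    (hθc : θc = ((nbhdPts X l u π).filter (fun x => x ∉ boxSet Ml Mu)).card)
    (hθb : θb = ((nbhdPts X l u π).filter
        (fun x => x ∈ frontier (boxSet Ml Mu))).card) :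
    γ ≤ ((θc : ℝ) + θb) / p ∧ (θc : ℝ) / q ≤ γ := by
  classical
  have hne : (Finset.univ : Finset (Fin n)).Nonempty := ⟨⟨0, hn⟩, Finset.mem_univ _⟩
  set N : Finset (Fin n → ℝ) := nbhdPts X l u π with hNdef
  obtain ⟨⟨hMbox, hMle, hMopt⟩, hMmax⟩ := hM
  set m : (Fin n → ℝ) → ℝ := fun x => Finset.univ.inf' hne (BoxAux.mrg Ml Mu x) with hmdef
  have hw : ∀ x, weight Ml Mu x = min 0 (m x) := fun x => BoxAux.weight_eq_min hne Ml Mu x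
  have hmem : ∀ x, x ∈ boxSet Ml Mu ↔ 0 ≤ m x := fun x => BoxAux.mem_boxSet_iff hne Ml Mu x
  have hNmem : ∀ x ∈ N, x ∈ nbhd l u π := fun x hx => (Finset.mem_filter.mp hx).2
  -- α < 1
  have hα1' : α < 1 := by
    rcases lt_or_eq_of_le hα1 with h | h
    · exact h
    exfalso
    subst h
    have hle2 : BoxLE l u (fun i => Ml i - 1) (fun i => Mu i + 1) := by
      intro i
      refine ⟨?_, ?_⟩
      · show Ml i - 1 ≤ l i; linarith [(hMle i).1]
      · show u i ≤ Mu i + 1; linarith [(hMle i).2]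
    have hb2 : IsBox (fun i => Ml i - 1) (fun i => Mu i + 1) := by
      intro i; show Ml i - 1 ≤ Mu i + 1; linarith [hMbox i]
    have hwle : ∀ x ∈ N, weight Ml Mu x ≤ weight (fun i => Ml i - 1) (fun i => Mu i + 1) x := by
      intro x _
      refine BoxAux.weight_mono hne (fun i => ⟨?_, ?_⟩) x
      · show Ml i - 1 ≤ Ml i; linarith
      · show Mu i ≤ Mu i + 1; linarith
    have hcost : cost 1 (fun i => Ml i - 1) (fun i => Mu i + 1) N ≤ cost 1 Ml Mu N := by
      unfold cost
      have := Finset.sum_le_sum hwle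
      simp only [sub_self, zero_mul, add_zero, neg_one_mul, neg_le_neg_iff]
      exact this
    have hopt2 : OptSol 1 l u N (fun i => Ml i - 1) (fun i => Mu i + 1) :=
      ⟨hb2, hle2, fun l'' u'' hb hle => le_trans hcost (hMopt l'' u'' hb hle)⟩
    have h2 : Ml ⟨0, hn⟩ ≤ Ml ⟨0, hn⟩ - 1 := (hMmax _ _ hopt2 ⟨0, hn⟩).1
    linarith
  -- M stays strictly inside the π-neighborhood
  have hMuπ : ∀ k, Mu k < u k + π := by
    intro k
    by_contra hcon
    push_neg at hcon
    obtain ⟨c, hck, hcx, hclt⟩ : ∃ c : ℝ, u k ≤ c ∧ (∀ x ∈ N, x k ≤ c) ∧ c < u k + π := by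
      by_cases hNe : N.Nonempty
      · refine ⟨max (u k) (N.sup' hNe (fun x => x k)), le_max_left _ _, ?_, ?_⟩
        · intro x hx; exact le_max_of_le_right (Finset.le_sup' (fun x => x k) hx)
        · exact max_lt (by linarith) ((Finset.sup'_lt_iff hNe).mpr
            (fun x hx => (hNmem x hx k).2))
      · exact ⟨u k, le_rfl, fun x hx => absurd ⟨x, hx⟩ hNe, by linarith⟩
    set Mu2 : Fin n → ℝ := Function.update Mu k c with hMu2def
    have hMu2k : Mu2 k = c := Function.update_self k c Mu
    have hMu2i : ∀ i, i ≠ k → Mu2 i = Mu i := fun i hi => Function.update_of_ne hi c Mu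
    have hb2 : IsBox Ml Mu2 := by
      intro i
      by_cases hik : i = k
      · subst hik; rw [hMu2k]; exact le_trans (hMle i).1 (le_trans (hV i) hck)
      · rw [hMu2i i hik]; exact hMbox i
    have hle2 : BoxLE l u Ml Mu2 := by
      intro i
      refine ⟨(hMle i).1, ?_⟩
      by_cases hik : i = k
      · subst hik; rw [hMu2k]; exact hck
      · rw [hMu2i i hik]; exact (hMle i).2
    have hwle : ∀ x ∈ N, weight Ml Mu x ≤ weight Ml Mu2 x := by
      intro x hx
      rw [BoxAux.weight_eq_inf' hne, BoxAux.weight_eq_inf' hne]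
      refine Finset.le_inf' _ _ (fun i _ => ?_)
      by_cases hik : i = k
      · subst hik
        have h1 : Finset.univ.inf' hne (fun j => min 0 (BoxAux.mrg Ml Mu x j)) ≤
            min 0 (BoxAux.mrg Ml Mu x i) := Finset.inf'_le _ (Finset.mem_univ i)
        have h2 : min 0 (BoxAux.mrg Ml Mu x i) ≤ min 0 (BoxAux.mrg Ml Mu2 x i) := by
          unfold BoxAux.mrg
          rw [hMu2k]
          have hbx : (0:ℝ) ≤ c - x i := by linarith [hcx x hx]
          refine le_min (min_le_left _ _) (le_min ?_ ?_)
          · exact le_trans (min_le_right _ _) (min_le_left _ _)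
          · exact le_trans (min_le_left _ _) hbx
        exact le_trans h1 h2
      · have heq : BoxAux.mrg Ml Mu2 x i = BoxAux.mrg Ml Mu x i := by
          unfold BoxAux.mrg; rw [hMu2i i hik]
        rw [heq]; exact Finset.inf'_le _ (Finset.mem_univ i)
    have hwidth : width Ml Mu2 = width Ml Mu - (Mu k - c) := by
      unfold width
      have hcg : ∀ i ∈ Finset.univ,
          Mu2 i - Ml i = (Mu i - Ml i) + (if i = k then c - Mu k else 0) := by
        intro i _
        by_cases hik : i = k
        · subst hik; rw [hMu2k, if_pos rfl]; ring
        · rw [hMu2i i hik, if_neg hik]; ring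
      rw [Finset.sum_congr rfl hcg, Finset.sum_add_distrib,
        Finset.sum_ite_eq' Finset.univ k (fun _ => c - Mu k), if_pos (Finset.mem_univ k)]
      ring
    have hcup : 0 < Mu k - c := by linarith
    have hs := Finset.sum_le_sum hwle
    have hcost2 : cost α Ml Mu2 N < cost α Ml Mu N := by
      unfold cost
      rw [hwidth]
      have h1 : α * (∑ x ∈ N, weight Ml Mu x) ≤ α * (∑ x ∈ N, weight Ml Mu2 x) :=
        mul_le_mul_of_nonneg_left hs hα0.le
      have h2 : 0 < (1 - α) * (Mu k - c) := mul_pos (by linarith) hcup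
      nlinarith [h1, h2]
    exact absurd (hMopt Ml Mu2 hb2 hle2) (not_le.mpr hcost2)
  have hMlπ : ∀ k, l k - π < Ml k := by
    intro k
    by_contra hcon
    push_neg at hcon
    obtain ⟨c, hck, hcx, hclt⟩ : ∃ c : ℝ, c ≤ l k ∧ (∀ x ∈ N, c ≤ x k) ∧ l k - π < c := by
      by_cases hNe : N.Nonempty
      · refine ⟨min (l k) (N.inf' hNe (fun x => x k)), min_le_left _ _, ?_, ?_⟩
        · intro x hx; exact min_le_of_right_le (Finset.inf'_le (fun x => x k) hx)
        · exact lt_min (by linarith) ((Finset.lt_inf'_iff hNe).mpr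
            (fun x hx => (hNmem x hx k).1))
      · exact ⟨l k, le_rfl, fun x hx => absurd ⟨x, hx⟩ hNe, by linarith⟩
    set Ml2 : Fin n → ℝ := Function.update Ml k c with hMl2def
    have hMl2k : Ml2 k = c := Function.update_self k c Ml
    have hMl2i : ∀ i, i ≠ k → Ml2 i = Ml i := fun i hi => Function.update_of_ne hi c Ml
    have hb2 : IsBox Ml2 Mu := by
      intro i
      by_cases hik : i = k
      · subst hik; rw [hMl2k]; exact le_trans hck (le_trans (hV i) (hMle i).2)
      · rw [hMl2i i hik]; exact hMbox i
    have hle2 : BoxLE l u Ml2 Mu := by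
      intro i
      refine ⟨?_, (hMle i).2⟩
      by_cases hik : i = k
      · subst hik; rw [hMl2k]; exact hck
      · rw [hMl2i i hik]; exact (hMle i).1
    have hwle : ∀ x ∈ N, weight Ml Mu x ≤ weight Ml2 Mu x := by
      intro x hx
      rw [BoxAux.weight_eq_inf' hne, BoxAux.weight_eq_inf' hne]
      refine Finset.le_inf' _ _ (fun i _ => ?_)
      by_cases hik : i = k
      · subst hik
        have h1 : Finset.univ.inf' hne (fun j => min 0 (BoxAux.mrg Ml Mu x j)) ≤
            min 0 (BoxAux.mrg Ml Mu x i) := Finset.inf'_le _ (Finset.mem_univ i)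
        have h2 : min 0 (BoxAux.mrg Ml Mu x i) ≤ min 0 (BoxAux.mrg Ml2 Mu x i) := by
          unfold BoxAux.mrg
          rw [hMl2k]
          have hbx : (0:ℝ) ≤ x i - c := by linarith [hcx x hx]
          refine le_min (min_le_left _ _) (le_min ?_ ?_)
          · exact le_trans (min_le_left _ _) hbx
          · exact le_trans (min_le_right _ _) (min_le_right _ _)
        exact le_trans h1 h2
      · have heq : BoxAux.mrg Ml2 Mu x i = BoxAux.mrg Ml Mu x i := by
          unfold BoxAux.mrg; rw [hMl2i i hik]
        rw [heq]; exact Finset.inf'_le _ (Finset.mem_univ i)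
    have hwidth : width Ml2 Mu = width Ml Mu - (c - Ml k) := by
      unfold width
      have hcg : ∀ i ∈ Finset.univ,
          Mu i - Ml2 i = (Mu i - Ml i) + (if i = k then Ml k - c else 0) := by
        intro i _
        by_cases hik : i = k
        · subst hik; rw [hMl2k, if_pos rfl]; ring
        · rw [hMl2i i hik, if_neg hik]; ring
      rw [Finset.sum_congr rfl hcg, Finset.sum_add_distrib,
        Finset.sum_ite_eq' Finset.univ k (fun _ => Ml k - c), if_pos (Finset.mem_univ k)]
      ring
    have hcup : 0 < c - Ml k := by linarith
    have hs := Finset.sum_le_sum hwle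
    have hcost2 : cost α Ml2 Mu N < cost α Ml Mu N := by
      unfold cost
      rw [hwidth]
      have h1 : α * (∑ x ∈ N, weight Ml Mu x) ≤ α * (∑ x ∈ N, weight Ml2 Mu x) :=
        mul_le_mul_of_nonneg_left hs hα0.le
      have h2 : 0 < (1 - α) * (c - Ml k) := mul_pos (by linarith) hcup
      nlinarith [h1, h2]
    exact absurd (hMopt Ml2 Mu hb2 hle2) (not_le.mpr hcost2)
  -- all facets lie in the neighborhood, so q = 2n
  have hq2n : (q : ℝ) = 2 * n := by
    have hfu : (Finset.univ.filter (fun ib : Fin n × Bool =>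
        facet Ml Mu ib.1 ib.2 ⊆ nbhd l u π)) = Finset.univ := by
      apply Finset.filter_true_of_mem
      intro ib _
      intro x hx
      intro j
      exact ⟨lt_of_lt_of_le (hMlπ j) (hx.1 j).1, lt_of_le_of_lt (hx.1 j).2 (hMuπ j)⟩
    rw [hq, hfu, Finset.card_univ, Fintype.card_prod, Fintype.card_fin, Fintype.card_bool]
    push_cast; ring
  -- expansion inequality
  have hexp : α * θc ≤ (1 - α) * (2 * n) := by
    set T : Finset ℝ := insert (1:ℝ) ((N.filter (fun x => m x < 0)).image (fun x => -m x))
      with hT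
    have hT1 : (1:ℝ) ∈ T := Finset.mem_insert_self _ _
    set ε : ℝ := T.min' (show T.Nonempty from ⟨1, hT1⟩) with hεdef
    have hεpos : 0 < ε := by
      rw [hεdef, Finset.lt_min'_iff]
      intro y hy
      rw [hT, Finset.mem_insert] at hy
      rcases hy with rfl | hy
      · exact one_pos
      · obtain ⟨x, hx, rfl⟩ := Finset.mem_image.mp hy
        have := (Finset.mem_filter.mp hx).2
        linarith
    have hεle : ∀ x ∈ N, m x < 0 → ε ≤ -m x := by
      intro x hx h
      refine Finset.min'_le _ _ ?_
      rw [hT]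
      exact Finset.mem_insert_of_mem
        (Finset.mem_image_of_mem _ (Finset.mem_filter.mpr ⟨hx, h⟩))
    set Ml2 : Fin n → ℝ := fun i => Ml i - ε with hMl2
    set Mu2 : Fin n → ℝ := fun i => Mu i + ε with hMu2
    have hMl2i : ∀ i, Ml2 i = Ml i - ε := fun i => rfl
    have hMu2i : ∀ i, Mu2 i = Mu i + ε := fun i => rfl
    have hb2 : IsBox Ml2 Mu2 := by
      intro i; rw [hMl2i, hMu2i]; linarith [hMbox i]
    have hle2 : BoxLE l u Ml2 Mu2 := by
      intro i
      rw [hMl2i, hMu2i]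
      exact ⟨by linarith [(hMle i).1], by linarith [(hMle i).2]⟩
    have hm2 : ∀ x, Finset.univ.inf' hne (BoxAux.mrg Ml2 Mu2 x) = m x + ε := by
      intro x
      have hfun : BoxAux.mrg Ml2 Mu2 x = fun i => BoxAux.mrg Ml Mu x i + ε := by
        funext i
        unfold BoxAux.mrg
        rw [hMl2i, hMu2i, ← min_add_add_right]
        congr 1 <;> ring
      rw [hfun, BoxAux.inf'_add_const]
    have hwx : ∀ x ∈ N,
        weight Ml2 Mu2 x = weight Ml Mu x + (if x ∉ boxSet Ml Mu then ε else 0) := by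
      intro x hx
      rw [BoxAux.weight_eq_min hne, hw x, hm2 x]
      by_cases hb : x ∈ boxSet Ml Mu
      · rw [if_neg (not_not_intro hb)]
        have h0 : 0 ≤ m x := (hmem x).mp hb
        rw [min_eq_left h0, min_eq_left (by linarith), add_zero]
      · rw [if_pos hb]
        have h0 : m x < 0 := lt_of_not_ge (fun h => hb ((hmem x).mpr h))
        have h1 : ε ≤ -m x := hεle x hx h0
        rw [min_eq_right (by linarith), min_eq_right h0.le]
    have hsum : ∑ x ∈ N, weight Ml2 Mu2 x = (∑ x ∈ N, weight Ml Mu x) + ε * θc := by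
      rw [Finset.sum_congr rfl hwx, Finset.sum_add_distrib]
      congr 1
      rw [Finset.sum_ite, Finset.sum_const, Finset.sum_const_zero, add_zero, hθc,
        nsmul_eq_mul]
      ring
    have hwidth : width Ml2 Mu2 = width Ml Mu + 2 * n * ε := by
      unfold width
      have hcg : ∀ i ∈ Finset.univ, Mu2 i - Ml2 i = (Mu i - Ml i) + 2 * ε := by
        intro i _; rw [hMl2i, hMu2i]; ring
      rw [Finset.sum_congr rfl hcg, Finset.sum_add_distrib, Finset.sum_const,
        Finset.card_univ, Fintype.card_fin, nsmul_eq_mul]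
      ring
    have hcost := hMopt Ml2 Mu2 hb2 hle2
    unfold cost at hcost
    rw [hsum, hwidth] at hcost
    have key : (α * (θc : ℝ)) * ε ≤ ((1 - α) * (2 * n)) * ε := by nlinarith [hcost]
    exact le_of_mul_le_mul_right key hεpos
  -- shrink inequality
  have hshr : (1 - α) * p ≤ α * ((θc : ℝ) + θb) := by
    set P : Finset (Fin n × Bool) := Finset.univ.filter (fun ib : Fin n × Bool =>
        Disjoint (facet Ml Mu ib.1 ib.2) (boxSet l u)) with hPdef
    have hPu : ∀ i : Fin n, (i, true) ∈ P ↔ u i < Mu i := by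
      intro i
      rw [hPdef, Finset.mem_filter]
      simp only [Finset.mem_univ, true_and]
      constructor
      · intro hd
        by_contra hc
        push_neg at hc
        have heq : Mu i = u i := le_antisymm hc (hMle i).2
        have hu1 : u ∈ facet Ml Mu i true := by
          refine ⟨fun j => ⟨le_trans (hMle j).1 (hV j), (hMle j).2⟩, ?_⟩
          simp [heq]
        have hu2 : u ∈ boxSet l u := fun j => ⟨hV j, le_rfl⟩
        exact Set.disjoint_left.mp hd hu1 hu2
      · intro hlt
        rw [Set.disjoint_left]
        intro x hx hx2
        have hxi : x i = Mu i := by simpa using hx.2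
        have hxu : x i ≤ u i := (hx2 i).2
        linarith
    have hPl : ∀ i : Fin n, (i, false) ∈ P ↔ Ml i < l i := by
      intro i
      rw [hPdef, Finset.mem_filter]
      simp only [Finset.mem_univ, true_and]
      constructor
      · intro hd
        by_contra hc
        push_neg at hc
        have heq : Ml i = l i := le_antisymm (hMle i).1 hc
        have hu1 : l ∈ facet Ml Mu i false := by
          refine ⟨fun j => ⟨(hMle j).1, le_trans (hV j) (hMle j).2⟩, ?_⟩
          simp [heq]
        have hu2 : l ∈ boxSet l u := fun j => ⟨le_rfl, hV j⟩
        exact Set.disjoint_left.mp hd hu1 hu2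
      · intro hlt
        rw [Set.disjoint_left]
        intro x hx hx2
        have hxi : x i = Ml i := by simpa using hx.2
        have hxl : l i ≤ x i := (hx2 i).1
        linarith
    set S : Finset ℝ := insert (1:ℝ)
      ((P.image (fun ib => if ib.2 then Mu ib.1 - u ib.1 else l ib.1 - Ml ib.1)) ∪
       ((N.filter (fun x => 0 < m x)).image m)) with hSdef
    have hS1 : (1:ℝ) ∈ S := Finset.mem_insert_self _ _
    set ε : ℝ := S.min' (show S.Nonempty from ⟨1, hS1⟩) with hεdef
    have hεpos : 0 < ε := by
      rw [hεdef, Finset.lt_min'_iff]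
      intro y hy
      rw [hSdef, Finset.mem_insert, Finset.mem_union] at hy
      rcases hy with rfl | hy | hy
      · exact one_pos
      · obtain ⟨ib, hib, rfl⟩ := Finset.mem_image.mp hy
        obtain ⟨i, b⟩ := ib
        cases b
        · simpa using sub_pos.mpr ((hPl i).mp hib)
        · simpa using sub_pos.mpr ((hPu i).mp hib)
      · obtain ⟨x, hx, rfl⟩ := Finset.mem_image.mp hy
        exact (Finset.mem_filter.mp hx).2
    have hεu : ∀ i, (i, true) ∈ P → ε ≤ Mu i - u i := by
      intro i hi
      refine Finset.min'_le _ _ ?_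
      rw [hSdef]
      refine Finset.mem_insert_of_mem (Finset.mem_union_left _ ?_)
      exact Finset.mem_image.mpr ⟨(i, true), hi, by simp⟩
    have hεl : ∀ i, (i, false) ∈ P → ε ≤ l i - Ml i := by
      intro i hi
      refine Finset.min'_le _ _ ?_
      rw [hSdef]
      refine Finset.mem_insert_of_mem (Finset.mem_union_left _ ?_)
      exact Finset.mem_image.mpr ⟨(i, false), hi, by simp⟩
    have hεm : ∀ x ∈ N, 0 < m x → ε ≤ m x := by
      intro x hx h
      refine Finset.min'_le _ _ ?_
      rw [hSdef]
      refine Finset.mem_insert_of_mem (Finset.mem_union_right _ ?_)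
      exact Finset.mem_image.mpr ⟨x, Finset.mem_filter.mpr ⟨hx, h⟩, rfl⟩
    set Ml2 : Fin n → ℝ := fun i => if (i, false) ∈ P then Ml i + ε else Ml i with hMl2
    set Mu2 : Fin n → ℝ := fun i => if (i, true) ∈ P then Mu i - ε else Mu i with hMu2
    have hMl2i : ∀ i, Ml2 i = if (i, false) ∈ P then Ml i + ε else Ml i := fun i => rfl
    have hMu2i : ∀ i, Mu2 i = if (i, true) ∈ P then Mu i - ε else Mu i := fun i => rfl
    have hMl2le : ∀ i, Ml2 i ≤ l i := by
      intro i
      rw [hMl2i]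
      split_ifs with h
      · linarith [hεl i h]
      · exact (hMle i).1
    have hMu2ge : ∀ i, u i ≤ Mu2 i := by
      intro i
      rw [hMu2i]
      split_ifs with h
      · linarith [hεu i h]
      · exact (hMle i).2
    have hMl2b : ∀ i, Ml i ≤ Ml2 i ∧ Ml2 i ≤ Ml i + ε := by
      intro i; rw [hMl2i]; split_ifs <;> constructor <;> linarith
    have hMu2b : ∀ i, Mu i - ε ≤ Mu2 i ∧ Mu2 i ≤ Mu i := by
      intro i; rw [hMu2i]; split_ifs <;> constructor <;> linarith
    have hb2 : IsBox Ml2 Mu2 := fun i => le_trans (hMl2le i) (le_trans (hV i) (hMu2ge i))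
    have hle2 : BoxLE l u Ml2 Mu2 := fun i => ⟨hMl2le i, hMu2ge i⟩
    have hm2 : ∀ x, m x - ε ≤ Finset.univ.inf' hne (BoxAux.mrg Ml2 Mu2 x) := by
      intro x
      refine Finset.le_inf' _ _ (fun i _ => ?_)
      have h1 : m x ≤ BoxAux.mrg Ml Mu x i := Finset.inf'_le _ (Finset.mem_univ i)
      have h2 : BoxAux.mrg Ml Mu x i - ε ≤ BoxAux.mrg Ml2 Mu2 x i := by
        unfold BoxAux.mrg
        refine le_min ?_ ?_
        · have hmin := min_le_left (x i - Ml i) (Mu i - x i)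
          linarith [(hMl2b i).2]
        · have hmin := min_le_right (x i - Ml i) (Mu i - x i)
          linarith [(hMu2b i).1]
      linarith
    have hwgen : ∀ x, weight Ml Mu x - weight Ml2 Mu2 x ≤ ε := by
      intro x
      rw [hw x, BoxAux.weight_eq_min hne]
      have h2 := hm2 x
      simp only [min_def]
      split_ifs <;> linarith
    have hwzero : ∀ x ∈ N, x ∈ boxSet Ml Mu → x ∉ frontier (boxSet Ml Mu) →
        weight Ml Mu x - weight Ml2 Mu2 x ≤ 0 := by
      intro x hx hbx hfx
      have hpos : 0 < m x := BoxAux.interior_pos hne Ml Mu x hbx hfx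
      have hεx := hεm x hx hpos
      rw [hw x, BoxAux.weight_eq_min hne]
      have h2 := hm2 x
      rw [min_eq_left hpos.le, min_eq_left (by linarith)]
      simp
    have hsum : (∑ x ∈ N, weight Ml Mu x) - (∑ x ∈ N, weight Ml2 Mu2 x) ≤
        ε * ((θc : ℝ) + θb) := by
      rw [← Finset.sum_sub_distrib]
      have hb1 : ∀ x ∈ N, weight Ml Mu x - weight Ml2 Mu2 x ≤
          (if (x ∉ boxSet Ml Mu ∨ x ∈ frontier (boxSet Ml Mu)) then ε else 0) := by
        intro x hx
        split_ifs with h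
        · exact hwgen x
        · push_neg at h
          exact hwzero x hx h.1 h.2
      refine le_trans (Finset.sum_le_sum hb1) ?_
      rw [Finset.sum_ite, Finset.sum_const, Finset.sum_const_zero, add_zero]
      have hdisj : Disjoint (N.filter (fun x => x ∉ boxSet Ml Mu))
          (N.filter (fun x => x ∈ frontier (boxSet Ml Mu))) := by
        rw [Finset.disjoint_left]
        intro x h1 h2
        have hx1 := (Finset.mem_filter.mp h1).2
        have hx2 := (Finset.mem_filter.mp h2).2
        have hclosed : IsClosed (boxSet Ml Mu) := by
          rw [BoxAux.boxSet_eq_Icc]; exact isClosed_Icc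
        exact hx1 (hclosed.frontier_subset hx2)
      rw [Finset.filter_or, Finset.card_union_of_disjoint hdisj, nsmul_eq_mul, ← hθc, ← hθb]
      push_cast
      ring_nf
      exact le_rfl
    have hεp : ε * (p : ℝ) =
        ∑ i, ((if (i, true) ∈ P then ε else 0) + (if (i, false) ∈ P then ε else 0)) := by
      have h1 : ε * (p : ℝ) = ∑ ib : Fin n × Bool, (if ib ∈ P then ε else 0) := by
        rw [Finset.sum_ite_mem, Finset.univ_inter, Finset.sum_const, nsmul_eq_mul, hp]
        ring
      rw [h1, Fintype.sum_prod_type]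
      exact Finset.sum_congr rfl (fun i _ => by rw [Fintype.sum_bool])
    have hwidth : width Ml Mu - width Ml2 Mu2 = ε * p := by
      unfold width
      rw [← Finset.sum_sub_distrib, hεp]
      refine Finset.sum_congr rfl (fun i _ => ?_)
      rw [hMl2i, hMu2i]
      split_ifs <;> ring
    have hcost := hMopt Ml2 Mu2 hb2 hle2
    unfold cost at hcost
    have hW : width Ml2 Mu2 = width Ml Mu - ε * p := by linarith [hwidth]
    rw [hW] at hcost
    have hαs : α * ((∑ x ∈ N, weight Ml Mu x) - (∑ x ∈ N, weight Ml2 Mu2 x)) ≤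
        α * (ε * ((θc : ℝ) + θb)) := mul_le_mul_of_nonneg_left hsum hα0.le
    have key : ((1 - α) * p) * ε ≤ (α * ((θc : ℝ) + θb)) * ε := by linarith [hcost, hαs]
    exact le_of_mul_le_mul_right key hεpos
  have hγ' : γ = (1 - α) / α := by rw [hγ]; field_simp
  have hppos : (0 : ℝ) < p := by exact_mod_cast hp1
  have hqpos : (0 : ℝ) < q := by exact_mod_cast hq1
  constructor
  · rw [hγ', div_le_div_iff₀ hα0 hppos]
    linarith
  · rw [hγ', div_le_div_iff₀ hqpos hα0, hq2n]
    linarith [hexp]
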